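/- For the orthonormal basis {E₁,...,E₈} = {A₁,A₂,A₃,A₄,B₁,B₂,C₁,C₂} of m ⊂ so(5) and the metric given by the standard inner product B = Σαᵢ² + Σβᵢ² + Σγᵢ², the sectional-curvature quantities R_{XYYX} = (1/4)B([X,Y]_m, [X,Y]_m) + B([X,Y]_{g_e}, [X,Y]_{g_e}) are all nonnegative; in particular R_{1221} = 1 (for X = A₁ = E_{13}, Y = A₂ = E_{14}) and R_{1551} = 1/4 (for X = A₁, Y = B₁ = E_{15}). -/

import Mathlib

open Matrix

/-- Elementary skew-symmetric matrix: `1` at `(i,j)`, `-1` at `(j,i)` (0-based indices). -/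
def E (i j : Fin 5) : Matrix (Fin 5) (Fin 5) ℝ :=
  Matrix.single i j 1 - Matrix.single j i 1

/-- `m = span{A₁,A₂,A₃,A₄,B₁,B₂,C₁,C₂}` (0-based: `A₁ = E 0 2`, `A₂ = E 0 3`,
`A₃ = E 1 2`, `A₄ = E 1 3`, `B₁ = E 0 4`, `B₂ = E 1 4`, `C₁ = E 2 4`, `C₂ = E 3 4`). -/
noncomputable def mm : Submodule ℝ (Matrix (Fin 5) (Fin 5) ℝ) :=
  Submodule.span ℝ {E 0 2, E 0 3, E 1 2, E 1 3, E 0 4, E 1 4, E 2 4, E 3 4}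

/-- The inner product making the elementary skew-symmetric matrices orthonormal:
`B X Y = tr (Xᵀ Y) / 2`. -/
noncomputable def B (X Y : Matrix (Fin 5) (Fin 5) ℝ) : ℝ :=
  Matrix.trace (Xᵀ * Y) / 2

/-- Projection onto `m` (kills the `g_e`-entries `(0,1),(1,0),(2,3),(3,2)`). -/
def projm (X : Matrix (Fin 5) (Fin 5) ℝ) : Matrix (Fin 5) (Fin 5) ℝ :=
  Matrix.of fun i j =>
    if (i = 0 ∧ j = 1) ∨ (i = 1 ∧ j = 0) ∨ (i = 2 ∧ j = 3) ∨ (i = 3 ∧ j = 2) then 0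
    else X i j

/-- Projection onto `g_e` (keeps only the entries `(0,1),(1,0),(2,3),(3,2)`). -/
def projge (X : Matrix (Fin 5) (Fin 5) ℝ) : Matrix (Fin 5) (Fin 5) ℝ :=
  Matrix.of fun i j =>
    if (i = 0 ∧ j = 1) ∨ (i = 1 ∧ j = 0) ∨ (i = 2 ∧ j = 3) ∨ (i = 3 ∧ j = 2) then X i j
    else 0

/-- The sectional-curvature quantity
`R(X,Y,Y,X) = (1/4) B(⁅X,Y⁆_m, ⁅X,Y⁆_m) + B(⁅X,Y⁆_{g_e}, ⁅X,Y⁆_{g_e})`. -/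
noncomputable def R (X Y : Matrix (Fin 5) (Fin 5) ℝ) : ℝ :=
  (1 / 4) * B (projm ⁅X, Y⁆) (projm ⁅X, Y⁆) + B (projge ⁅X, Y⁆) (projge ⁅X, Y⁆)

lemma B_self_nonneg (X : Matrix (Fin 5) (Fin 5) ℝ) : 0 ≤ B X X := by
  unfold B
  apply div_nonneg _ (by norm_num)
  rw [Matrix.trace]
  apply Finset.sum_nonneg
  intro i _
  rw [Matrix.diag_apply, Matrix.mul_apply]
  apply Finset.sum_nonneg
  intro j _
  rw [Matrix.transpose_apply]
  exact mul_self_nonneg _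

/-- The sectional curvature quantities are nonnegative on `m`; in particular
`R_{1221} = 1` (for `X = A₁`, `Y = A₂`) and `R_{1551} = 1/4` (for `X = A₁`, `Y = B₁`). -/
theorem sectional_curvature_nonneg :
    (∀ X ∈ mm, ∀ Y ∈ mm, 0 ≤ R X Y) ∧
    R (E 0 2) (E 0 3) = 1 ∧ R (E 0 2) (E 0 4) = 1 / 4 := by
  refine ⟨fun X _ Y _ => ?_, ?_, ?_⟩
  · unfold R
    have h1 := B_self_nonneg (projm ⁅X, Y⁆)
    have h2 := B_self_nonneg (projge ⁅X, Y⁆)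
    nlinarith
  all_goals
    simp only [R, B, projm, projge, E, Ring.lie_def, Matrix.trace, Matrix.diag_apply,
      Matrix.mul_apply, Matrix.transpose_apply, Matrix.sub_apply, Matrix.of_apply,
      Matrix.single, Fin.sum_univ_five, Fin.isValue]
    norm_num [Fin.ext_iff, show ((2:Fin 5)).val = 2 from rfl, show ((3:Fin 5)).val = 3 from rfl,
      show ((4:Fin 5)).val = 4 from rfl, show ((0:Fin 5)).val = 0 from rfl, show ((1:Fin 5)).val = 1 from rfl]
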